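/- Let X be a normed vector lattice, let C ⊆ X₊ be a non-zero max-cone, and let T : C → C be bounded, positively homogeneous, and finite-suprema preserving. If t is a real number with sup{r_x(T) : x ∈ C} ≤ t ≤ r(T), then t ∈ σ_ap(T). In particular, r(T) ∈ σ_ap(T). -/

import Mathlib

open Filter Topology Bornology Pointwise

variable {X : Type*}

section ConeDefs

variable [NormedAddCommGroup X] [NormedSpace ℝ X]

/-- `C` is a cone (with vertex `0`): `tC ⊆ C` for all `t ≥ 0`. -/
def IsCone (C : Set X) : Prop :=
  ∀ t : ℝ, 0 ≤ t → ∀ x ∈ C, t • x ∈ C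

/-- `T` is positively homogeneous (of degree 1) on `C`. -/
def PosHomOn (C : Set X) (T : X → X) : Prop :=
  ∀ t : ℝ, 0 ≤ t → ∀ x ∈ C, T (t • x) = t • T x

/-- `T` is Lipschitz on `C`. -/
def LipschitzOnCone (C : Set X) (T : X → X) : Prop :=
  ∃ L : ℝ, 0 < L ∧ ∀ x ∈ C, ∀ y ∈ C, ‖T x - T y‖ ≤ L * ‖x - y‖

/-- `T` is bounded on `C`: the set of ratios `‖T x‖/‖x‖` (over nonzero `x ∈ C`)
is bounded above. -/
def BoundedOnCone (C : Set X) (T : X → X) : Prop :=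
  BddAbove {r : ℝ | ∃ x ∈ C, x ≠ 0 ∧ r = ‖T x‖ / ‖x‖}

/-- The norm `‖T‖ = sup {‖T x‖/‖x‖ : x ∈ C, x ≠ 0}` of `T` on the cone `C`. -/
noncomputable def coneNorm (C : Set X) (T : X → X) : ℝ :=
  sSup {r : ℝ | ∃ x ∈ C, x ≠ 0 ∧ r = ‖T x‖ / ‖x‖}

/-- The Bonsall cone spectral radius `r(T) = lim_n ‖Tⁿ‖^{1/n} = inf_n ‖Tⁿ‖^{1/n}`
of `T` on the cone `C` (the limit exists and equals the infimum by submultiplicativity). -/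
noncomputable def coneRadius (C : Set X) (T : X → X) : ℝ :=
  ⨅ n : ℕ, (coneNorm C (T^[n + 1])) ^ ((1 : ℝ) / (n + 1))

/-- The local cone spectral radius `r_x(T) = limsup_n ‖Tⁿ x‖^{1/n}`. -/
noncomputable def localRadius (C : Set X) (T : X → X) (x : X) : ℝ :=
  Filter.limsup (fun n : ℕ => ‖T^[n] x‖ ^ ((1 : ℝ) / n)) Filter.atTop

/-- The approximate point spectrum of `T` on the cone `C`: all `s ≥ 0` with
`inf {‖T x - s x‖ : x ∈ C, ‖x‖ = 1} = 0`. -/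
def apSpectrum (C : Set X) (T : X → X) : Set ℝ :=
  {s : ℝ | 0 ≤ s ∧ ∀ ε : ℝ, 0 < ε → ∃ x ∈ C, ‖x‖ = 1 ∧ ‖T x - s • x‖ < ε}

end ConeDefs

section LatticeDefs

variable [Lattice X]

/-- A max-cone: a cone contained in the positive cone such that the supremum of any
two of its elements belongs to it (given here together with `C ⊆ X₊` separately). -/
def MaxCone [NormedAddCommGroup X] [NormedSpace ℝ X] (C : Set X) : Prop :=
  IsCone C ∧ (∀ x ∈ C, 0 ≤ x) ∧ ∀ x ∈ C, ∀ y ∈ C, x ⊔ y ∈ C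

/-- `T` preserves finite suprema on `C`. -/
def PreservesSupOn (C : Set X) (T : X → X) : Prop :=
  ∀ x ∈ C, ∀ y ∈ C, T (x ⊔ y) = T x ⊔ T y

end LatticeDefs

section AuxSmul
set_option linter.unusedSectionVars false
variable {X : Type*} [NormedAddCommGroup X] [Lattice X] [HasSolidNorm X]
    [IsOrderedAddMonoid X] [NormedSpace ℝ X]

lemma aux_inf_add_le {a b c : X} (ha : 0 ≤ a) (hb : 0 ≤ b) (hc : 0 ≤ c) :
    a ⊓ (b + c) ≤ a ⊓ b + a ⊓ c := by
  have h1 : a ⊓ (b + c) - c ≤ a ⊓ b := by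
    calc a ⊓ (b + c) - c = (a - c) ⊓ (b + c - c) := by rw [inf_sub]
    _ ≤ a ⊓ b := by
        apply inf_le_inf
        · exact sub_le_self _ hc
        · simp
  rw [← sub_le_iff_le_add']
  apply le_inf
  · have h0 : 0 ≤ a ⊓ b := le_inf ha hb
    have : a ⊓ (b + c) ≤ a + a ⊓ b := inf_le_left.trans (le_add_of_nonneg_right h0)
    rwa [sub_le_iff_le_add]
  · rw [sub_le_iff_le_add']
    rwa [sub_le_iff_le_add] at h1

lemma aux_inf_nsmul_eq_zero {a b : X} (ha : 0 ≤ a) (hb : 0 ≤ b) (hab : a ⊓ b = 0) :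
    ∀ n : ℕ, a ⊓ (n • b) = 0 := by
  intro n
  induction n with
  | zero => simpa using ha
  | succ k ih =>
      have hnsb : 0 ≤ k • b := nsmul_nonneg hb k
      have := aux_inf_add_le ha hnsb hb
      rw [← succ_nsmul] at this
      have h0 : 0 ≤ a ⊓ ((k+1) • b) := le_inf ha (nsmul_nonneg hb (k+1))
      rw [ih, hab] at this
      simpa using le_antisymm (by simpa using this) h0

lemma aux_nonneg_of_nsmul {v : X} {n : ℕ} (hn : n ≠ 0) (h : 0 ≤ n • v) : 0 ≤ v := by
  have hd : v⁻ ⊓ v⁺ = 0 := by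
    rw [inf_comm]; exact posPart_inf_negPart_eq_zero v
  have hsub : n • v = n • v⁺ - n • v⁻ := by
    rw [← nsmul_sub, posPart_sub_negPart]
  have hle : v⁻ ≤ n • v⁺ := by
    have h1 : v⁻ ≤ n • v⁻ := by
      obtain ⟨m, rfl⟩ := Nat.exists_eq_succ_of_ne_zero hn
      rw [succ_nsmul]
      exact le_add_of_nonneg_left (nsmul_nonneg (negPart_nonneg v) m)
    have h2 : n • v⁻ ≤ n • v⁺ := by
      have := h; rw [hsub, sub_nonneg] at this; exact this
    exact h1.trans h2
  have hz := aux_inf_nsmul_eq_zero (negPart_nonneg v) (posPart_nonneg v) hd n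
  have hv : v⁻ = 0 := by
    rw [← inf_eq_left.mpr hle]; exact hz
  have hvv := posPart_sub_negPart v
  rw [hv, sub_zero] at hvv
  rw [← hvv]; exact posPart_nonneg v

lemma aux_smul_nonneg {c : ℝ} {v : X} (hc : 0 ≤ c) (hv : 0 ≤ v) : 0 ≤ c • v := by
  have hq : ∀ q : ℚ, 0 ≤ q → 0 ≤ (q : ℝ) • v := by
    intro q hq0
    apply aux_nonneg_of_nsmul (n := q.den) q.den_nz
    have key : (q.den : ℕ) • ((q:ℝ) • v) = q.num.toNat • v := by
      rw [← Nat.cast_smul_eq_nsmul ℝ, smul_smul, ← Nat.cast_smul_eq_nsmul ℝ q.num.toNat]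
      congr 1
      have h1 : ((q.den:ℝ) * q) = ((q.num:ℤ) : ℝ) := by
        rw [mul_comm]
        exact_mod_cast congrArg (fun r : ℚ => (r : ℝ)) (Rat.mul_den_eq_num q)
      rw [h1]
      have : (q.num.toNat : ℤ) = q.num := Int.toNat_of_nonneg (Rat.num_nonneg.mpr hq0)
      exact_mod_cast congrArg (fun z : ℤ => (z : ℝ)) this.symm
    rw [key]
    exact nsmul_nonneg hv _
  -- approximate c from above by rationals
  have hex : ∀ n : ℕ, ∃ q : ℚ, c < (q:ℝ) ∧ (q:ℝ) < c + 1/(n+1) := by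
    intro n
    obtain ⟨q, hq1, hq2⟩ := exists_rat_btwn (show c < c + 1/(n+1) by
      have h0 : (0:ℝ) < 1/((n:ℝ)+1) := by positivity
      linarith)
    exact ⟨q, hq1, hq2⟩
  choose q hq1 hq2 using hex
  have htend : Filter.Tendsto (fun n : ℕ => ((q n : ℝ))) Filter.atTop (nhds c) := by
    have h1 : Filter.Tendsto (fun n : ℕ => c + 1/((n:ℝ)+1)) Filter.atTop (nhds (c + 0)) :=
      Filter.Tendsto.const_add c tendsto_one_div_add_atTop_nhds_zero_nat
    rw [add_zero] at h1
    exact tendsto_of_tendsto_of_tendsto_of_le_of_le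
      (tendsto_const_nhds : Filter.Tendsto (fun _ : ℕ => c) Filter.atTop (nhds c)) h1
      (fun n => (hq1 n).le) (fun n => (hq2 n).le)
  have hsm : Filter.Tendsto (fun n : ℕ => ((q n : ℝ)) • v) Filter.atTop (nhds (c • v)) :=
    htend.smul_const v
  exact ge_of_tendsto' hsm (fun n => hq (q n) (by exact_mod_cast (hc.trans (hq1 n).le)))

lemma aux_smul_mono {a b : X} {c : ℝ} (hc : 0 ≤ c) (hab : a ≤ b) : c • a ≤ c • b := by
  have := aux_smul_nonneg hc (sub_nonneg.mpr hab)
  rw [smul_sub, sub_nonneg] at this; exact this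

lemma aux_smul_sup {c : ℝ} (hc : 0 ≤ c) (a b : X) : c • (a ⊔ b) = c • a ⊔ c • b := by
  rcases eq_or_lt_of_le hc with h | h
  · simp [← h]
  · apply le_antisymm
    · have h1 : a ⊔ b ≤ c⁻¹ • (c • a ⊔ c • b) := by
        apply sup_le
        · have := aux_smul_mono (inv_nonneg.mpr hc) (le_sup_left (a := c • a) (b := c • b))
          rwa [inv_smul_smul₀ h.ne'] at this
        · have := aux_smul_mono (inv_nonneg.mpr hc) (le_sup_right (a := c • a) (b := c • b))
          rwa [inv_smul_smul₀ h.ne'] at this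
      have := aux_smul_mono hc h1
      rwa [smul_inv_smul₀ h.ne'] at this
    · exact sup_le (aux_smul_mono hc le_sup_left) (aux_smul_mono hc le_sup_right)

end AuxSmul

section A
variable [NormedAddCommGroup X] [Lattice X] [HasSolidNorm X]
    [IsOrderedAddMonoid X] [NormedSpace ℝ X]


lemma aux_smul_mono_scalar {s s' : ℝ} {v : X} (hv : 0 ≤ v) (h : s ≤ s') : s • v ≤ s' • v := by
  have := aux_smul_nonneg (sub_nonneg.mpr h) hv
  rw [sub_smul, sub_nonneg] at this; exact this

noncomputable def supOrbit (T : X → X) (w : ℕ → ℝ) (x : X) : ℕ → X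
  | 0 => w 0 • x
  | (k+1) => supOrbit T w x k ⊔ w (k+1) • T^[k+1] x

variable {C : Set X} {T : X → X} {w : ℕ → ℝ} {x : X}

lemma it_mem (hTC : Set.MapsTo T C C) (hx : x ∈ C) (k : ℕ) : T^[k] x ∈ C := Set.MapsTo.iterate hTC k hx

lemma so_mem (hC : MaxCone C) (hTC : Set.MapsTo T C C) (hw : ∀ j, 0 ≤ w j) (hx : x ∈ C) : ∀ k, supOrbit T w x k ∈ C := by
  intro k
  induction k with
  | zero => exact hC.1 _ (hw 0) _ hx
  | succ k ih => exact hC.2.2 _ ih _ (hC.1 _ (hw (k+1)) _ (it_mem hTC hx (k+1)))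

lemma so_mono (k : ℕ) : supOrbit T w x k ≤ supOrbit T w x (k+1) := le_sup_left

lemma so_mono_le {k k' : ℕ} (h : k ≤ k') : supOrbit T w x k ≤ supOrbit T w x k' := by
  induction k' with
  | zero => rw [Nat.le_zero.mp h]
  | succ m ih =>
      rcases Nat.lt_or_ge k (m+1) with h' | h'
      · exact (ih (Nat.lt_succ_iff.mp h')).trans (so_mono m)
      · rw [Nat.le_antisymm h h']

lemma so_le {j k : ℕ} (h : j ≤ k) : w j • T^[j] x ≤ supOrbit T w x k := by
  have h1 : w j • T^[j] x ≤ supOrbit T w x j := by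
    cases j with
    | zero => simp [supOrbit]
    | succ m => exact le_sup_right
  exact h1.trans (so_mono_le h)

lemma so_map (hC : MaxCone C) (hTC : Set.MapsTo T C C) (hhom : PosHomOn C T) (hsup : PreservesSupOn C T) (hw : ∀ j, 0 ≤ w j) (hx : x ∈ C) : ∀ k, T (supOrbit T w x k) = supOrbit T w (T x) k := by
  intro k
  induction k with
  | zero =>
      show T (w 0 • x) = w 0 • T x
      exact hhom _ (hw 0) _ hx
  | succ k ih =>
      show T (supOrbit T w x k ⊔ w (k+1) • T^[k+1] x) = _
      rw [hsup _ (so_mem hC hTC hw hx k) _ (hC.1 _ (hw (k+1)) _ (it_mem hTC hx (k+1))),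
        ih, hhom _ (hw (k+1)) _ (it_mem hTC hx (k+1))]
      show _ = supOrbit T w (T x) k ⊔ w (k+1) • T^[k+1] (T x)
      rw [← Function.iterate_succ_apply T (k+1) x, Function.iterate_succ_apply' T (k+1) x]

lemma so_B (hC : MaxCone C) (hTC : Set.MapsTo T C C) (hw : ∀ j, 0 ≤ w j) (hx : x ∈ C) {c : ℝ} (hc : 0 ≤ c) (hwc : ∀ j, w j ≤ c * w (j+1)) :
    ∀ k, supOrbit T w (T x) k ≤ c • supOrbit T w x k ⊔ w k • T^[k+1] x := by
  intro k
  induction k with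
  | zero =>
      show w 0 • T x ≤ _
      have : w 0 • T x = w 0 • T^[0+1] x := by simp
      rw [this]; exact le_sup_right
  | succ k hIH =>
      show supOrbit T w (T x) k ⊔ w (k+1) • T^[k+1] (T x) ≤ _
      have h1 : c • supOrbit T w x k ≤ c • supOrbit T w x (k+1) :=
        aux_smul_mono hc (so_mono k)
      have h2 : w k • T^[k+1] x ≤ c • supOrbit T w x (k+1) := by
        have ha : w k • T^[k+1] x ≤ (c * w (k+1)) • T^[k+1] x :=
          aux_smul_mono_scalar (hC.2.1 _ (it_mem hTC hx (k+1))) (hwc k)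
        have hb : (c * w (k+1)) • T^[k+1] x = c • (w (k+1) • T^[k+1] x) := by
          rw [smul_smul]
        exact ha.trans (hb.le.trans (aux_smul_mono hc (so_le (le_refl (k+1)))))
      have h3 : supOrbit T w (T x) k ≤ c • supOrbit T w x (k+1) :=
        hIH.trans (sup_le h1 h2)
      have h4 : w (k+1) • T^[k+1] (T x) = w (k+1) • T^[(k+1)+1] x := by
        rw [← Function.iterate_succ_apply T (k+1) x]
      exact sup_le (h3.trans le_sup_left) (h4.le.trans le_sup_right)

lemma so_C (hC : MaxCone C) (hTC : Set.MapsTo T C C) (hw : ∀ j, 0 ≤ w j) (hx : x ∈ C) {t γ : ℝ} (ht : 0 ≤ t) (hγ : 0 ≤ 1 + γ) (hwt : ∀ j, t * w (j+1) ≤ (1+γ) * w j) :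
    ∀ k, t • supOrbit T w x k ≤ (t * w 0) • x ⊔ (1+γ) • supOrbit T w (T x) k := by
  intro k
  induction k with
  | zero =>
      show t • (w 0 • x) ≤ _
      rw [smul_smul]; exact le_sup_left
  | succ k hIH =>
      show t • (supOrbit T w x k ⊔ w (k+1) • T^[k+1] x) ≤ _
      rw [aux_smul_sup ht]
      have h1 : (1+γ) • supOrbit T w (T x) k ≤ (1+γ) • supOrbit T w (T x) (k+1) :=
        aux_smul_mono hγ (so_mono k)
      have h2 : t • (w (k+1) • T^[k+1] x) ≤ (1+γ) • supOrbit T w (T x) (k+1) := by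
        have hv : (0:X) ≤ T^[k+1] x := hC.2.1 _ (it_mem hTC hx (k+1))
        have ha : t • (w (k+1) • T^[k+1] x) = (t * w (k+1)) • T^[k+1] x := smul_smul t _ _
        have hb : (t * w (k+1)) • T^[k+1] x ≤ ((1+γ) * w k) • T^[k+1] x :=
          aux_smul_mono_scalar hv (hwt k)
        have hc' : ((1+γ) * w k) • T^[k+1] x = (1+γ) • (w k • T^[k+1] x) := by rw [smul_smul]
        have hd : w k • T^[k+1] x ≤ supOrbit T w (T x) (k+1) := by
          have : w k • T^[k] (T x) ≤ supOrbit T w (T x) (k+1) :=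
            so_le (Nat.le_succ k)
          rwa [← Function.iterate_succ_apply T k x] at this
        rw [ha]
        exact hb.trans (hc'.le.trans (aux_smul_mono hγ hd))
      exact sup_le (hIH.trans (sup_le_sup_left h1 _)) (h2.trans le_sup_right)
end A

section Key
variable [NormedAddCommGroup X] [Lattice X] [HasSolidNorm X]
    [IsOrderedAddMonoid X] [NormedSpace ℝ X]

lemma loc_nonneg (C : Set X) (T : X → X) (x : X) : 0 ≤ localRadius C T x := by
  rw [localRadius, Filter.limsup_eq]
  apply Real.sInf_nonneg
  rintro a ha
  obtain ⟨n, hn⟩ := ha.exists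
  exact le_trans (Real.rpow_nonneg (norm_nonneg _) _) hn

lemma loc_bdd {T : X → X} {x : X} {L : ℝ} (hL1 : 1 ≤ L)
    (hLn : ∀ n : ℕ, ‖T^[n] x‖ ≤ L^n * ‖x‖) :
    Filter.IsBoundedUnder (· ≤ ·) Filter.atTop (fun n : ℕ => ‖T^[n] x‖ ^ ((1 : ℝ) / n)) := by
  set B := L * max 1 ‖x‖ with hB
  have hB1 : 1 ≤ B := by
    have : (1:ℝ) ≤ max 1 ‖x‖ := le_max_left _ _
    nlinarith
  apply Filter.isBoundedUnder_of
  refine ⟨B, fun n => ?_⟩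
  cases n with
  | zero => simpa using hB1
  | succ k =>
      set n := k + 1
      have hn0 : (n:ℝ) ≠ 0 := by positivity
      have h1 : ‖T^[n] x‖ ≤ B ^ n := by
        have h2 : L^n * ‖x‖ ≤ B^n := by
          rw [hB, mul_pow]
          have h3 : ‖x‖ ≤ max 1 ‖x‖ := le_max_right _ _
          have h4 : max 1 ‖x‖ ≤ (max 1 ‖x‖)^n := le_self_pow₀ (le_max_left _ _) (by omega)
          have h5 : (0:ℝ) < L^n := by positivity
          nlinarith
        exact (hLn n).trans h2
      have h6 : ‖T^[n] x‖ ^ ((1:ℝ)/n) ≤ (B^n) ^ ((1:ℝ)/n) :=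
        Real.rpow_le_rpow (norm_nonneg _) h1 (by positivity)
      have h7 : ((B^n : ℝ)) ^ ((1:ℝ)/n) = B := by
        rw [← Real.rpow_natCast B n, ← Real.rpow_mul (by linarith : (0:ℝ) ≤ B),
          mul_one_div_cancel hn0, Real.rpow_one]
      rw [h7] at h6
      exact h6

lemma coneNorm_ge {C : Set X} {T : X → X} (hCne : ∃ x ∈ C, x ≠ 0)
    (hTC : Set.MapsTo T C C) {t : ℝ} (h0t : 0 ≤ t) (ht2 : t ≤ coneRadius C T)
    (N : ℕ) (hN : 1 ≤ N) : t ^ N ≤ coneNorm C (T^[N]) := by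
  obtain ⟨x₀, hx₀C, hx₀⟩ := hCne
  have hnn : ∀ (S : X → X), 0 ≤ coneNorm C S := by
    intro S
    apply Real.sSup_nonneg
    rintro r ⟨x, hx, hne, rfl⟩
    positivity
  have hbdd : BddBelow (Set.range fun n : ℕ => (coneNorm C (T^[n + 1])) ^ ((1 : ℝ) / (n + 1))) := by
    refine ⟨0, ?_⟩
    rintro r ⟨n, rfl⟩
    exact Real.rpow_nonneg (hnn _) _
  obtain ⟨m, rfl⟩ : ∃ m, N = m + 1 := ⟨N - 1, by omega⟩
  have h1 : t ≤ (coneNorm C (T^[m+1])) ^ ((1 : ℝ) / ((m:ℝ) + 1)) := ht2.trans (ciInf_le hbdd m)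
  have h2 : t ^ ((m:ℝ) + 1) ≤ ((coneNorm C (T^[m+1])) ^ ((1 : ℝ) / ((m:ℝ)+1))) ^ ((m:ℝ)+1) :=
    Real.rpow_le_rpow h0t h1 (by positivity)
  have h3 : ((coneNorm C (T^[m+1])) ^ ((1 : ℝ) / ((m:ℝ)+1))) ^ ((m:ℝ)+1) = coneNorm C (T^[m+1]) := by
    rw [← Real.rpow_mul (hnn _), one_div_mul_cancel (by positivity : ((m:ℝ)+1) ≠ 0), Real.rpow_one]
  have h4 : ((m:ℝ) + 1) = (((m+1 : ℕ)):ℝ) := by push_cast; ring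
  rw [h3, h4, Real.rpow_natCast] at h2
  exact h2

lemma exists_good_x {C : Set X} {T : X → X} (hCne : ∃ x ∈ C, x ≠ 0)
    (hTC : Set.MapsTo T C C) {t s : ℝ} (h0t : 0 ≤ t) (ht2 : t ≤ coneRadius C T)
    (h0s : 0 ≤ s) (hs : s < t) (N : ℕ) (hN : 1 ≤ N) :
    ∃ x ∈ C, x ≠ 0 ∧ s ^ N * ‖x‖ < ‖T^[N] x‖ := by
  obtain ⟨x₀, hx₀C, hx₀⟩ := hCne
  have hlt : s ^ N < coneNorm C (T^[N]) :=
    lt_of_lt_of_le (pow_lt_pow_left₀ hs h0s (by omega)) (coneNorm_ge ⟨x₀, hx₀C, hx₀⟩ hTC h0t ht2 N hN)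
  have hne : {r : ℝ | ∃ x ∈ C, x ≠ 0 ∧ r = ‖T^[N] x‖ / ‖x‖}.Nonempty :=
    ⟨‖T^[N] x₀‖ / ‖x₀‖, x₀, hx₀C, hx₀, rfl⟩
  obtain ⟨r, ⟨x, hxC, hxne, rfl⟩, hr⟩ := exists_lt_of_lt_csSup hne hlt
  refine ⟨x, hxC, hxne, ?_⟩
  have hx0 : 0 < ‖x‖ := norm_pos_iff.mpr hxne
  rwa [lt_div_iff₀ hx0] at hr
end Key

section Key2
variable [NormedAddCommGroup X] [Lattice X] [HasSolidNorm X]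
    [IsOrderedAddMonoid X] [NormedSpace ℝ X]

set_option maxHeartbeats 2000000 in
lemma key_mem (C : Set X) (hC : MaxCone C) (hCne : ∃ x ∈ C, x ≠ 0)
    (T : X → X) (hTC : Set.MapsTo T C C)
    (hbdd : BoundedOnCone C T) (hhom : PosHomOn C T) (hsup : PreservesSupOn C T)
    (t : ℝ) (ht1 : ∀ x ∈ C, localRadius C T x ≤ t) (ht2 : t ≤ coneRadius C T) :
    t ∈ apSpectrum C T := by
  obtain ⟨x₀, hx₀C, hx₀⟩ := hCne
  -- basic facts
  have h0C : (0:X) ∈ C := by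
    have := hC.1 0 le_rfl x₀ hx₀C; simpa using this
  have hT0 : T 0 = 0 := by
    have := hhom 0 le_rfl x₀ hx₀C; simpa using this
  obtain ⟨L₀, hL₀⟩ := hbdd
  set L := max L₀ 1 with hLdef
  have hL1 : (1:ℝ) ≤ L := le_max_right _ _
  have hL : ∀ x ∈ C, ‖T x‖ ≤ L * ‖x‖ := by
    intro x hx
    rcases eq_or_ne x 0 with rfl | hne
    · simp [hT0]
    · have h1 : ‖T x‖ / ‖x‖ ≤ L₀ := hL₀ ⟨x, hx, hne, rfl⟩
      have h2 : (0:ℝ) < ‖x‖ := norm_pos_iff.mpr hne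
      have h3 : ‖T x‖ / ‖x‖ ≤ L := h1.trans (le_max_left _ _)
      rw [div_le_iff₀ h2] at h3
      linarith [h3]
  have hLn : ∀ x ∈ C, ∀ n : ℕ, ‖T^[n] x‖ ≤ L^n * ‖x‖ := by
    intro x hx n
    induction n with
    | zero => simp
    | succ k ih =>
        rw [Function.iterate_succ_apply']
        calc ‖T (T^[k] x)‖ ≤ L * ‖T^[k] x‖ := hL _ (it_mem hTC hx k)
        _ ≤ L * (L^k * ‖x‖) := by nlinarith [norm_nonneg (T^[k] x), ih]
        _ = L^(k+1) * ‖x‖ := by ring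
  have h0t : 0 ≤ t := (loc_nonneg C T x₀).trans (ht1 x₀ hx₀C)
  refine ⟨h0t, ?_⟩
  intro ε hε
  -- the case t = 0
  rcases eq_or_lt_of_le h0t with h0 | hpos
  · by_contra hcon
    push_neg at hcon
    have hlow : ∀ x ∈ C, ε * ‖x‖ ≤ ‖T x‖ := by
      intro x hx
      rcases eq_or_ne x 0 with rfl | hne
      · simp [hT0]
      · have hx0 : (0:ℝ) < ‖x‖ := norm_pos_iff.mpr hne
        have hmem : ‖x‖⁻¹ • x ∈ C := hC.1 _ (by positivity) _ hx
        have hn1 : ‖(‖x‖⁻¹ • x)‖ = 1 := by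
          rw [norm_smul, Real.norm_of_nonneg (by positivity)]
          field_simp
        have := hcon _ hmem hn1
        rw [← h0, zero_smul, sub_zero, hhom _ (by positivity) _ hx, norm_smul,
          Real.norm_of_nonneg (by positivity)] at this
        calc ε * ‖x‖ ≤ (‖x‖⁻¹ * ‖T x‖) * ‖x‖ := by nlinarith
        _ = ‖T x‖ := by field_simp
    -- then the orbit of x₀ grows at rate ε, contradicting localRadius ≤ 0
    have horb : ∀ n : ℕ, ε^n * ‖x₀‖ ≤ ‖T^[n] x₀‖ := by
      intro n
      induction n with
      | zero => simp
      | succ k ih =>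
          rw [Function.iterate_succ_apply']
          calc ε^(k+1) * ‖x₀‖ = ε * (ε^k * ‖x₀‖) := by ring
          _ ≤ ε * ‖T^[k] x₀‖ := by nlinarith
          _ ≤ ‖T (T^[k] x₀)‖ := hlow _ (it_mem hTC hx₀C k)
    have hloc : (ε/2 : ℝ) ≤ localRadius C T x₀ := by
      apply Filter.le_limsup_of_frequently_le _ (loc_bdd hL1 (hLn x₀ hx₀C))
      apply Filter.Eventually.frequently
      -- eventually ε * ‖x₀‖^(1/n) ≥ ε/2
      have hx0n : (0:ℝ) < ‖x₀‖ := norm_pos_iff.mpr hx₀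
      have htend : Filter.Tendsto (fun n : ℕ => ε * ‖x₀‖ ^ ((1:ℝ)/n)) Filter.atTop (nhds (ε * 1)) := by
        apply Filter.Tendsto.const_mul
        have : Filter.Tendsto (fun n : ℕ => ((1:ℝ)/n)) Filter.atTop (nhds 0) := by
          exact tendsto_one_div_atTop_nhds_zero_nat
        have := (Real.continuousAt_const_rpow (show ‖x₀‖ ≠ 0 by positivity)).tendsto.comp this
        simpa [Real.rpow_zero, Function.comp_def] using this
      rw [mul_one] at htend
      have hev : ∀ᶠ n : ℕ in Filter.atTop, ε/2 < ε * ‖x₀‖ ^ ((1:ℝ)/n) :=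
        htend.eventually_const_lt (by linarith)
      filter_upwards [hev, Filter.eventually_ge_atTop 1] with n hn hn1
      have h1 : (ε^n * ‖x₀‖) ^ ((1:ℝ)/n) ≤ ‖T^[n] x₀‖ ^ ((1:ℝ)/n) :=
        Real.rpow_le_rpow (by positivity) (horb n) (by positivity)
      have h2 : ((ε^n * ‖x₀‖) : ℝ) ^ ((1:ℝ)/n) = ε * ‖x₀‖ ^ ((1:ℝ)/n) := by
        rw [Real.mul_rpow (by positivity) (by positivity), ← Real.rpow_natCast ε n,
          ← Real.rpow_mul hε.le]
        rw [mul_one_div_cancel (by positivity : ((n:ℝ)) ≠ 0), Real.rpow_one]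
      rw [h2] at h1
      exact (hn.le).trans h1
    have := (hloc.trans (ht1 x₀ hx₀C))
    rw [← h0] at this
    linarith

  -- main case : t > 0
  · set D := t + L + 1 with hD
    have hD0 : (0:ℝ) < D := by simp only [hD]; linarith
    set γ := min 1 (ε / (4 * D)) with hγdef
    have hγ0 : 0 < γ := lt_min one_pos (by positivity)
    have hγD : γ * D ≤ ε / 4 := by
      have h1 : γ ≤ ε / (4*D) := min_le_right _ _
      calc γ * D ≤ (ε / (4*D)) * D := by nlinarith
      _ = ε / 4 := by field_simp
    have htD : t ≤ D := by simp only [hD]; linarith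
    have hγt : γ * t ≤ ε/4 := le_trans (by nlinarith) hγD
    have hγL : γ * L ≤ ε/4 := by
      have h2 : γ * L ≤ γ * D := by simp only [hD]; nlinarith
      exact h2.trans hγD
    obtain ⟨N, hN, hN1⟩ : ∃ N : ℕ, 8*(t+1)/ε < (1+γ/2)^N ∧ 1 ≤ N := by
      obtain ⟨N₀, hN₀⟩ := pow_unbounded_of_one_lt (8*(t+1)/ε) (by linarith : (1:ℝ) < 1+γ/2)
      exact ⟨N₀+1, lt_of_lt_of_le hN₀ (pow_le_pow_right₀ (by linarith) (Nat.le_succ _)), by omega⟩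
    have hγ1 : (0:ℝ) < 1 + γ := by linarith
    set q := (1+γ/2)/(1+γ) with hqdef
    have hq0 : 0 < q := by positivity
    have hq1 : (1+γ) * q = 1+γ/2 := by
      rw [hqdef]
      field_simp
    have hqlt : q < 1 := by rw [hqdef, div_lt_one hγ1]; linarith
    have hqt : q * t < t := by nlinarith
    obtain ⟨x, hxC, hxne, hax⟩ :=
      exists_good_x ⟨x₀, hx₀C, hx₀⟩ hTC h0t ht2 (by positivity) hqt N hN1
    have ht' : t ≠ 0 := ne_of_gt hpos
    set w : ℕ → ℝ := fun j => (1+γ) ^ (min (j:ℤ) (2*(N:ℤ) - (j:ℤ))) * t ^ (-(j:ℤ)) with hwdef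
    have hw : ∀ j, 0 < w j := fun j => mul_pos (zpow_pos hγ1 _) (zpow_pos hpos _)
    have hwnn : ∀ j, 0 ≤ w j := fun j => (hw j).le
    have hw0 : w 0 = 1 := by
      simp only [hwdef]
      rw [show min ((0:ℕ):ℤ) (2*(N:ℤ) - ((0:ℕ):ℤ)) = 0 by omega]
      norm_num
    have hw1 : ∀ j : ℕ, t * w (j+1) ≤ (1+γ) * w j := by
      intro j
      have hmono := zpow_le_zpow_right₀ (by linarith : (1:ℝ) ≤ 1+γ)
        (show min ((j+1:ℕ):ℤ) (2*(N:ℤ) - ((j+1:ℕ):ℤ)) ≤ min (j:ℤ) (2*(N:ℤ) - (j:ℤ)) + 1 by push_cast; omega)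
      calc t * w (j+1)
          = (1+γ) ^ (min ((j+1:ℕ):ℤ) (2*(N:ℤ) - ((j+1:ℕ):ℤ))) * (t ^ (-((j+1:ℕ):ℤ)) * t) := by
            simp only [hwdef]; ring
        _ = (1+γ) ^ (min ((j+1:ℕ):ℤ) (2*(N:ℤ) - ((j+1:ℕ):ℤ))) * t ^ (-(j:ℤ)) := by
            rw [← zpow_add_one₀ ht']
            congr 2
            push_cast; ring
        _ ≤ (1+γ) ^ (min (j:ℤ) (2*(N:ℤ) - (j:ℤ)) + 1) * t ^ (-(j:ℤ)) :=
            mul_le_mul_of_nonneg_right hmono (le_of_lt (zpow_pos hpos _))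
        _ = (1+γ) * w j := by
            rw [zpow_add_one₀ (by linarith : (1+γ:ℝ) ≠ 0)]
            simp only [hwdef]; ring
    have hw2 : ∀ j : ℕ, w j ≤ ((1+γ)*t) * w (j+1) := by
      intro j
      have hmono := zpow_le_zpow_right₀ (by linarith : (1:ℝ) ≤ 1+γ)
        (show min (j:ℤ) (2*(N:ℤ) - (j:ℤ)) ≤ min ((j+1:ℕ):ℤ) (2*(N:ℤ) - ((j+1:ℕ):ℤ)) + 1 by push_cast; omega)
      calc w j = (1+γ) ^ (min (j:ℤ) (2*(N:ℤ) - (j:ℤ))) * t ^ (-(j:ℤ)) := by simp only [hwdef]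
        _ ≤ (1+γ) ^ (min ((j+1:ℕ):ℤ) (2*(N:ℤ) - ((j+1:ℕ):ℤ)) + 1) * t ^ (-(j:ℤ)) :=
            mul_le_mul_of_nonneg_right hmono (le_of_lt (zpow_pos hpos _))
        _ = ((1+γ)*t) * w (j+1) := by
            rw [zpow_add_one₀ (by linarith : (1+γ:ℝ) ≠ 0)]
            simp only [hwdef]
            rw [show (-((j+1:ℕ):ℤ)) = -(j:ℤ) - 1 by push_cast; ring,
              zpow_sub₀ ht', zpow_one]
            field_simp
    -- eventual bound from local radius
    have hlb : localRadius C T x < t*(1+γ/4) := lt_of_le_of_lt (ht1 x hxC) (by nlinarith)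
    have hev : ∀ᶠ n : ℕ in Filter.atTop, ‖T^[n] x‖ ^ ((1:ℝ)/n) < t*(1+γ/4) := by
      rw [localRadius] at hlb
      exact Filter.eventually_lt_of_limsup_lt hlb (loc_bdd hL1 (hLn x hxC))
    obtain ⟨K, hK⟩ := Filter.eventually_atTop.mp hev
    set ρ := (1+γ/4)/(1+γ) with hρdef
    have hρ0 : (0:ℝ) ≤ ρ := by positivity
    have hρ1 : ρ < 1 := by rw [hρdef, div_lt_one hγ1]; linarith
    have hx0 : (0:ℝ) < ‖x‖ := norm_pos_iff.mpr hxne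
    have hβ : (0:ℝ) < ε/8 * ((1+γ/2)^N * ‖x‖) := by positivity
    have htend2 : Filter.Tendsto (fun M : ℕ => (t*(1+γ/4)*(1+γ)^(2*N)) * ρ^M)
        Filter.atTop (nhds 0) := by
      have h1 := tendsto_pow_atTop_nhds_zero_of_lt_one hρ0 hρ1
      have h2 := h1.const_mul (t*(1+γ/4)*(1+γ)^(2*N))
      simpa using h2
    obtain ⟨M, hM1, hM2, hM3⟩ : ∃ M : ℕ, N ≤ M ∧ K ≤ M + 1 ∧
        (t*(1+γ/4)*(1+γ)^(2*N)) * ρ^M < ε/8 * ((1+γ/2)^N * ‖x‖) := by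
      obtain ⟨M, h⟩ := ((Filter.eventually_ge_atTop N).and
        ((Filter.eventually_ge_atTop K).and (htend2.eventually_lt_const hβ))).exists
      exact ⟨M, h.1, by omega, h.2.2⟩
    -- the test vector y
    set y := supOrbit T w x M with hydef
    have hyC : y ∈ C := so_mem hC hTC hwnn hxC M
    have hy0 : (0:X) ≤ y := hC.2.1 _ hyC
    have hTyC : T y ∈ C := hTC hyC
    have hTy0 : (0:X) ≤ T y := hC.2.1 _ hTyC
    -- lower bound on ‖y‖
    have hwN : w N = (1+γ)^N / t^N := by
      simp only [hwdef]
      rw [show min ((N:ℕ):ℤ) (2*(N:ℤ) - ((N:ℕ):ℤ)) = ((N:ℕ):ℤ) by omega,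
        zpow_natCast, zpow_neg, zpow_natCast, div_eq_mul_inv]
    have hylow : (1+γ/2)^N * ‖x‖ ≤ ‖y‖ := by
      have h1 : w N • T^[N] x ≤ y := so_le hM1
      have h2 : (0:X) ≤ w N • T^[N] x := hC.2.1 _ (hC.1 _ (hwnn N) _ (it_mem hTC hxC N))
      have h3 : ‖w N • T^[N] x‖ ≤ ‖y‖ :=
        norm_le_norm_of_abs_le_abs (by rw [abs_of_nonneg h2, abs_of_nonneg hy0]; exact h1)
      have h4 : ‖w N • T^[N] x‖ = w N * ‖T^[N] x‖ := by
        rw [norm_smul, Real.norm_of_nonneg (hwnn N)]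
      have h5 : (1+γ/2)^N * ‖x‖ ≤ w N * ‖T^[N] x‖ := by
        have h6 : w N * ((q*t)^N * ‖x‖) ≤ w N * ‖T^[N] x‖ :=
          mul_le_mul_of_nonneg_left hax.le (hwnn N)
        have h7 : (1+γ/2)^N * ‖x‖ = w N * ((q*t)^N * ‖x‖) := by
          rw [hwN, ← hq1, mul_pow, mul_pow]
          have htN : (t:ℝ)^N ≠ 0 := pow_ne_zero _ ht'
          field_simp
        rw [h7]; exact h6
      rw [← h4] at h5
      exact h5.trans h3
    have hylow0 : (0:ℝ) < ‖y‖ := lt_of_lt_of_le (by positivity) hylow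
    -- bound on the tail term u
    have hwM : w M = ((1+γ)^(2*N) / (1+γ)^M) / t^M := by
      simp only [hwdef]
      rw [show min ((M:ℕ):ℤ) (2*(N:ℤ) - ((M:ℕ):ℤ)) = 2*(N:ℤ) - (M:ℤ) by omega,
        show (2*(N:ℤ) - (M:ℤ)) = ((2*N:ℕ):ℤ) - ((M:ℕ):ℤ) by push_cast; ring,
        zpow_sub₀ (by linarith : (1+γ:ℝ) ≠ 0), zpow_natCast, zpow_natCast,
        zpow_neg, zpow_natCast, div_eq_mul_inv, div_eq_mul_inv]
    have haM : ‖T^[M+1] x‖ ≤ (t*(1+γ/4))^(M+1) := by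
      have h1 := hK (M+1) (by omega)
      have h2 : (‖T^[M+1] x‖ ^ ((1:ℝ)/((M+1:ℕ):ℝ)))^((M+1:ℕ)) ≤ (t*(1+γ/4))^((M+1:ℕ)) :=
        pow_le_pow_left₀ (by positivity) h1.le _
      rw [← Real.rpow_natCast (‖T^[M+1] x‖ ^ ((1:ℝ)/((M+1:ℕ):ℝ))) (M+1),
        ← Real.rpow_mul (norm_nonneg _),
        one_div_mul_cancel (by positivity : ((M+1:ℕ):ℝ) ≠ 0), Real.rpow_one] at h2
      exact h2
    set u := w M • T^[M+1] x with hudef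
    have huC : u ∈ C := hC.1 _ (hwnn M) _ (it_mem hTC hxC (M+1))
    have hu0 : (0:X) ≤ u := hC.2.1 _ huC
    have hunorm : ‖u‖ ≤ ε/8 * ‖y‖ := by
      have h8 : ‖u‖ = w M * ‖T^[M+1] x‖ := by
        rw [hudef, norm_smul, Real.norm_of_nonneg (hwnn M)]
      have h9 : w M * ‖T^[M+1] x‖ ≤ w M * (t*(1+γ/4))^(M+1) :=
        mul_le_mul_of_nonneg_left haM (hwnn M)
      have h10 : w M * (t*(1+γ/4))^(M+1) = (t*(1+γ/4)*(1+γ)^(2*N)) * ρ^M := by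
        rw [hwM, hρdef, mul_pow, div_pow]
        have e1 : ((1+γ):ℝ)^M ≠ 0 := pow_ne_zero _ (by linarith)
        have e2 : (t:ℝ)^M ≠ 0 := pow_ne_zero _ ht'
        field_simp
        ring
      have h11 : ε/8 * ((1+γ/2)^N * ‖x‖) ≤ ε/8 * ‖y‖ := by nlinarith
      rw [h8]
      exact h9.trans (h10.le.trans (hM3.le.trans h11))
    -- main lattice inequalities
    have hB := so_B hC hTC hwnn hxC (show (0:ℝ) ≤ (1+γ)*t by positivity) hw2 M
    rw [← so_map hC hTC hhom hsup hwnn hxC M] at hB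
    have hCineq := so_C hC hTC hwnn hxC h0t (by linarith) hw1 M
    rw [← so_map hC hTC hhom hsup hwnn hxC M] at hCineq
    have hcy : (0:X) ≤ ((1+γ)*t) • y := aux_smul_nonneg (by positivity) hy0
    have hsum1 : T y ≤ ((1+γ)*t) • y + u :=
      hB.trans (sup_le (le_add_of_nonneg_right hu0) (le_add_of_nonneg_left hcy))
    have hx00 : (0:X) ≤ (t * w 0) • x := hC.2.1 _ (hC.1 _ (by positivity) _ hxC)
    have hsum2 : t • y ≤ (t * w 0) • x + (1+γ) • T y :=
      hCineq.trans (sup_le (le_add_of_nonneg_right (aux_smul_nonneg (by linarith) hTy0))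
        (le_add_of_nonneg_left hx00))
    set R₁ := (γ*t) • y + u with hR₁
    set R₂ := (t * w 0) • x + γ • T y with hR₂
    have hd1 : T y - t • y ≤ R₁ := by
      rw [sub_le_iff_le_add, hR₁]
      have heq : (γ*t) • y + u + t • y = ((1+γ)*t) • y + u := by module
      rw [heq]; exact hsum1
    have hd2 : t • y - T y ≤ R₂ := by
      rw [sub_le_iff_le_add, hR₂]
      have heq : (t * w 0) • x + γ • T y + T y = (t * w 0) • x + (1+γ) • T y := by module
      rw [heq]; exact hsum2
    have hR₁0 : (0:X) ≤ R₁ := add_nonneg (aux_smul_nonneg (by positivity) hy0) hu0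
    have hR₂0 : (0:X) ≤ R₂ := add_nonneg hx00 (aux_smul_nonneg hγ0.le hTy0)
    have habs : |T y - t • y| ≤ R₁ + R₂ := by
      rw [abs_le']
      constructor
      · exact hd1.trans (le_add_of_nonneg_right hR₂0)
      · rw [neg_sub]; exact hd2.trans (le_add_of_nonneg_left hR₁0)
    have hnorm1 : ‖T y - t • y‖ ≤ ‖R₁ + R₂‖ := by
      apply norm_le_norm_of_abs_le_abs
      rw [abs_of_nonneg (add_nonneg hR₁0 hR₂0)]
      exact habs
    -- numeric estimates
    have hTynorm : ‖T y‖ ≤ L * ‖y‖ := hL _ hyC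
    have hxly : t * ‖x‖ ≤ ε/8 * ‖y‖ := by
      have h1 : 8*(t+1)/ε < (1+γ/2)^N := hN
      have h2 : t + 1 ≤ ε/8 * (1+γ/2)^N := by
        rw [div_lt_iff₀ hε] at h1
        nlinarith
      have h3 : t * ‖x‖ ≤ (ε/8 * (1+γ/2)^N) * ‖x‖ := by nlinarith
      have h4 : (ε/8 * (1+γ/2)^N) * ‖x‖ = ε/8 * ((1+γ/2)^N * ‖x‖) := by ring
      rw [h4] at h3
      exact h3.trans (by nlinarith)
    have hfinal : ‖T y - t • y‖ < ε * ‖y‖ := by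
      have n1 : ‖R₁ + R₂‖ ≤ ‖R₁‖ + ‖R₂‖ := norm_add_le _ _
      have n2 : ‖R₁‖ ≤ γ*t*‖y‖ + ‖u‖ := by
        rw [hR₁]
        refine (norm_add_le _ _).trans ?_
        have : ‖(γ*t) • y‖ = (γ*t) * ‖y‖ := by
          rw [norm_smul, Real.norm_of_nonneg (by positivity)]
        rw [this]
      have n3 : ‖R₂‖ ≤ t*‖x‖ + γ*‖T y‖ := by
        rw [hR₂]
        refine (norm_add_le _ _).trans ?_
        have e1 : ‖(t * w 0) • x‖ = t * ‖x‖ := by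
          rw [norm_smul, Real.norm_of_nonneg (by positivity), hw0, mul_one]
        have e2 : ‖γ • T y‖ = γ * ‖T y‖ := by
          rw [norm_smul, Real.norm_of_nonneg hγ0.le]
        rw [e1, e2]
      have n4 : γ*t*‖y‖ ≤ ε/4*‖y‖ := by nlinarith
      have n5 : γ*‖T y‖ ≤ ε/4*‖y‖ := by nlinarith [norm_nonneg (T y)]
      calc ‖T y - t • y‖ ≤ ‖R₁‖ + ‖R₂‖ := hnorm1.trans n1
        _ ≤ (γ*t*‖y‖ + ‖u‖) + (t*‖x‖ + γ*‖T y‖) := by linarith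
        _ ≤ ε/4*‖y‖ + ε/8*‖y‖ + ε/8*‖y‖ + ε/4*‖y‖ := by linarith
        _ < ε * ‖y‖ := by nlinarith
    -- normalize
    refine ⟨‖y‖⁻¹ • y, hC.1 _ (by positivity) _ hyC, ?_, ?_⟩
    · rw [norm_smul, Real.norm_of_nonneg (by positivity)]
      field_simp
    · rw [hhom _ (by positivity) _ hyC]
      have heq : ‖y‖⁻¹ • T y - t • ‖y‖⁻¹ • y = ‖y‖⁻¹ • (T y - t • y) := by module
      rw [heq, norm_smul, Real.norm_of_nonneg (by positivity)]
      have h12 := mul_lt_mul_of_pos_left hfinal (inv_pos.mpr hylow0)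
      have h13 : ‖y‖⁻¹ * (ε * ‖y‖) = ε := by field_simp
      rw [h13] at h12
      exact h12

end Key2

/-- **Main theorem (Theorem 3.6).** Let `X` be a normed vector lattice, `C ⊆ X₊` a
non-zero max-cone, and `T : C → C` bounded, positively homogeneous and finite-suprema
preserving. If `sup {r_x(T) : x ∈ C} ≤ t ≤ r(T)`, then `t ∈ σ_ap(T)`.
In particular, `r(T) ∈ σ_ap(T)`. -/
theorem mem_apSpectrum_of_between [NormedAddCommGroup X] [Lattice X] [HasSolidNorm X]
    [IsOrderedAddMonoid X] [NormedSpace ℝ X]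
    (C : Set X) (hC : MaxCone C) (hCne : ∃ x ∈ C, x ≠ 0)
    (T : X → X) (hTC : Set.MapsTo T C C)
    (hbdd : BoundedOnCone C T) (hhom : PosHomOn C T) (hsup : PreservesSupOn C T)
    (t : ℝ) (ht1 : ∀ x ∈ C, localRadius C T x ≤ t) (ht2 : t ≤ coneRadius C T) :
    t ∈ apSpectrum C T ∧ coneRadius C T ∈ apSpectrum C T := by
  refine ⟨key_mem C hC hCne T hTC hbdd hhom hsup t ht1 ht2, ?_⟩
  exact key_mem C hC hCne T hTC hbdd hhom hsup (coneRadius C T)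
    (fun x hx => (ht1 x hx).trans ht2) le_rfl
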